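/- Let N ≥ 3, let a : ℝ → (0,∞)^{2N} be a differentiable solution of the periodic Volterra lattice equations ȧ_j = a_j(a_{j+1} − a_{j−1}), and fix n ≥ 1. Define the local conserved fields Q_j^{[n]}(t) = (−1)^n (L(a(t))^{2n})_{j,j} and the local currents J_j^{[n]}(t) = (−1)^{n+1} ( (L(a(t))^{2n})_{j,j+2} √(a_j(t) a_{j+1}(t)) + (L(a(t))^{2n})_{j−1,j+1} √(a_{j−1}(t) a_j(t)) ). Then the discrete local conservation law d/dt Q_j^{[n]}(t) = J_j^{[n]}(t) − J_{j−1}^{[n]}(t) holds for every j (indices mod 2N) and every t. -/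

import Mathlib

open Matrix

instance neZeroTwoMul (N : ℕ) [NeZero N] : NeZero (2 * N) :=
  ⟨by have := NeZero.ne N; omega⟩

/-- `Emat N r s` is the `2N × 2N` real matrix with a `1` in position `(r, s)`
and zeros elsewhere, indices taken mod `2N`. -/
noncomputable def Emat (N : ℕ) [NeZero N] (r s : ZMod (2 * N)) :
    Matrix (ZMod (2 * N)) (ZMod (2 * N)) ℝ :=
  Matrix.single r s 1

/-- The antisymmetric Lax matrix of the Volterra lattice:
`L(a) = ∑ j, √(a j) • (E_{j,j+1} - E_{j+1,j})`. -/
noncomputable def LaxL (N : ℕ) [NeZero N] (a : ZMod (2 * N) → ℝ) :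
    Matrix (ZMod (2 * N)) (ZMod (2 * N)) ℝ :=
  ∑ j : ZMod (2 * N), Real.sqrt (a j) • (Emat N j (j + 1) - Emat N (j + 1) j)

/-- The local conserved field `Q_j^{[n]}(t) = (−1)^n (L(a(t))^{2n})_{j,j}`. -/
noncomputable def Qfield (N : ℕ) [NeZero N] (n : ℕ) (a : ZMod (2 * N) → ℝ)
    (j : ZMod (2 * N)) : ℝ :=
  (-1 : ℝ) ^ n * (LaxL N a ^ (2 * n)) j j

/-- The local current
`J_j^{[n]}(t) = (−1)^{n+1} ((L^{2n})_{j,j+2} √(a_j a_{j+1}) + (L^{2n})_{j−1,j+1} √(a_{j−1} a_j))`. -/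
noncomputable def Jcurrent (N : ℕ) [NeZero N] (n : ℕ) (a : ZMod (2 * N) → ℝ)
    (j : ZMod (2 * N)) : ℝ :=
  (-1 : ℝ) ^ (n + 1) *
    ((LaxL N a ^ (2 * n)) j (j + 2) * Real.sqrt (a j * a (j + 1))
      + (LaxL N a ^ (2 * n)) (j - 1) (j + 1) * Real.sqrt (a (j - 1) * a j))

noncomputable def sumE (N : ℕ) [NeZero N] (f : ZMod (2 * N) → ℝ) (k : ZMod (2 * N)) :
    Matrix (ZMod (2 * N)) (ZMod (2 * N)) ℝ :=
  ∑ j : ZMod (2 * N), f j • (Emat N j (j + k) - Emat N (j + k) j)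

lemma sumE_apply (N : ℕ) [NeZero N] (f : ZMod (2 * N) → ℝ) (k p q : ZMod (2 * N)) :
    sumE N f k p q = (if p + k = q then f p else 0) - (if q + k = p then f q else 0) := by
  unfold sumE Emat Matrix.single
  rw [Matrix.sum_apply]
  simp only [Matrix.sub_apply, Matrix.smul_apply, Matrix.of_apply, smul_eq_mul, mul_sub,
    Finset.sum_sub_distrib]
  congr 1
  · rw [Finset.sum_eq_single p]
    · by_cases h : p + k = q <;> simp [h]
    · intro b _ hb
      simp [hb]
    · simp
  · rw [Finset.sum_eq_single q]
    · by_cases h : q + k = p <;> simp [h]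
    · intro b _ hb
      simp [hb]
    · simp

lemma sumE_mul_apply (N : ℕ) [NeZero N] (f : ZMod (2 * N) → ℝ) (k : ZMod (2 * N))
    (M : Matrix (ZMod (2 * N)) (ZMod (2 * N)) ℝ) (p q : ZMod (2 * N)) :
    (sumE N f k * M) p q = f p * M (p + k) q - f (p - k) * M (p - k) q := by
  rw [Matrix.mul_apply]
  simp only [sumE_apply, sub_mul, Finset.sum_sub_distrib]
  congr 1
  · rw [Finset.sum_eq_single (p + k)]
    · simp
    · intro b _ hb; simp [Ne.symm hb]
    · simp
  · rw [Finset.sum_eq_single (p - k)]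
    · simp
    · intro b _ hb
      have : ¬ (b + k = p) := fun h => hb (by linear_combination h)
      simp [this]
    · simp

lemma mul_sumE_apply (N : ℕ) [NeZero N] (f : ZMod (2 * N) → ℝ) (k : ZMod (2 * N))
    (M : Matrix (ZMod (2 * N)) (ZMod (2 * N)) ℝ) (p q : ZMod (2 * N)) :
    (M * sumE N f k) p q = M p (q - k) * f (q - k) - M p (q + k) * f q := by
  rw [Matrix.mul_apply]
  simp only [sumE_apply, mul_sub, Finset.sum_sub_distrib]
  congr 1
  · rw [Finset.sum_eq_single (q - k)]
    · simp
    · intro b _ hb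
      have : ¬ (b + k = q) := fun h => hb (by linear_combination h)
      simp [this]
    · simp
  · rw [Finset.sum_eq_single (q + k)]
    · simp
    · intro b _ hb; simp [Ne.symm hb]
    · simp

lemma cast_ne_zero_zmod (N : ℕ) [NeZero N] (hN : 3 ≤ N) (c : ℕ) (hc : 0 < c) (hc' : c < 6) :
    ((c : ℕ) : ZMod (2 * N)) ≠ 0 := by
  rw [Ne, ZMod.natCast_eq_zero_iff]
  intro h
  have := Nat.le_of_dvd hc h
  omega

lemma two_ne (N : ℕ) [NeZero N] (hN : 3 ≤ N) : (2 : ZMod (2 * N)) ≠ 0 := by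
  have := cast_ne_zero_zmod N hN 2 (by norm_num) (by norm_num)
  simpa using this

lemma four_ne (N : ℕ) [NeZero N] (hN : 3 ≤ N) : (4 : ZMod (2 * N)) ≠ 0 := by
  have := cast_ne_zero_zmod N hN 4 (by norm_num) (by norm_num)
  simpa using this

noncomputable def Bco (N : ℕ) [NeZero N] (a : ZMod (2 * N) → ℝ) (j : ZMod (2 * N)) : ℝ :=
  -(Real.sqrt (a j) * Real.sqrt (a (j + 1))) / 2

noncomputable def Dco (N : ℕ) [NeZero N] (a : ZMod (2 * N) → ℝ) (j : ZMod (2 * N)) : ℝ :=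
  Real.sqrt (a j) * (a (j + 1) - a (j - 1)) / 2

noncomputable def LaxL' (N : ℕ) [NeZero N] (a : ZMod (2 * N) → ℝ) :
    Matrix (ZMod (2 * N)) (ZMod (2 * N)) ℝ :=
  sumE N (fun j => Real.sqrt (a j)) 1

lemma myCommutator (N : ℕ) [NeZero N] (hN : 3 ≤ N) (a : ZMod (2 * N) → ℝ)
    (ha : ∀ j, 0 ≤ a j) :
    sumE N (Bco N a) 2 * LaxL' N a - LaxL' N a * sumE N (Bco N a) 2
      = sumE N (Dco N a) 1 := by
  ext p q
  rw [Matrix.sub_apply, sumE_mul_apply, mul_sumE_apply, LaxL']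
  simp only [sumE_apply]
  have e1 : (p + 2 + 1 = q) = (p + 3 = q) :=
    propext ⟨fun h => by linear_combination h, fun h => by linear_combination h⟩
  have e2 : (q + 1 = p + 2) = (p + 1 = q) :=
    propext ⟨fun h => by linear_combination -h, fun h => by linear_combination -h⟩
  have e3 : (p - 2 + 1 = q) = (q + 1 = p) :=
    propext ⟨fun h => by linear_combination -h, fun h => by linear_combination -h⟩
  have e4 : (q + 1 = p - 2) = (q + 3 = p) :=
    propext ⟨fun h => by linear_combination h, fun h => by linear_combination h⟩
  have e5 : (p + 1 = q - 2) = (p + 3 = q) :=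
    propext ⟨fun h => by linear_combination h, fun h => by linear_combination h⟩
  have e6 : (q - 2 + 1 = p) = (p + 1 = q) :=
    propext ⟨fun h => by linear_combination -h, fun h => by linear_combination -h⟩
  have e7 : (p + 1 = q + 2) = (q + 1 = p) :=
    propext ⟨fun h => by linear_combination -h, fun h => by linear_combination -h⟩
  have e8 : (q + 2 + 1 = p) = (q + 3 = p) :=
    propext ⟨fun h => by linear_combination h, fun h => by linear_combination h⟩
  simp only [e1, e2, e3, e4, e5, e6, e7, e8]
  split_ifs with h1 h2 h3 h4 <;>
    first
      | (exact absurd (show (2 : ZMod (2*N)) = 0 by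
            linear_combination (‹p + 3 = q› : p + 3 = q) - ‹p + 1 = q›) (two_ne N hN))
      | (exact absurd (show (4 : ZMod (2*N)) = 0 by
            linear_combination (‹p + 3 = q› : p + 3 = q) + ‹q + 1 = p›) (four_ne N hN))
      | (exact absurd (show (2 : ZMod (2*N)) = 0 by
            linear_combination (‹p + 1 = q› : p + 1 = q) + ‹q + 1 = p›) (two_ne N hN))
      | (exact absurd (show (4 : ZMod (2*N)) = 0 by
            linear_combination (‹p + 1 = q› : p + 1 = q) + ‹q + 3 = p›) (four_ne N hN))
      | (exact absurd (show (2 : ZMod (2*N)) = 0 by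
            linear_combination (‹q + 3 = p› : q + 3 = p) - ‹q + 1 = p›) (two_ne N hN))
      | skip
  all_goals simp only [Bco, Dco]
  all_goals try (have hs : p + 3 = q := ‹_›; subst hs)
  all_goals try (have hs : p + 1 = q := ‹_›; subst hs)
  all_goals try (have hs : q + 1 = p := ‹_›; subst hs)
  all_goals try (have hs : q + 3 = p := ‹_›; subst hs)
  all_goals ring_nf
  all_goals try (
    have h6 : ((5:ZMod (2*N)) + p = -1 + p) := by
      linear_combination (‹p + 3 + 3 = p› : p + 3 + 3 = p)
    have h6' : ((4:ZMod (2*N)) + p = -2 + p) := by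
      linear_combination (‹p + 3 + 3 = p› : p + 3 + 3 = p)
    rw [h6, h6'])
  all_goals try ring
  all_goals simp [Real.sq_sqrt, ha]
  all_goals try ring

lemma LaxL_transpose (N : ℕ) [NeZero N] (a : ZMod (2 * N) → ℝ) :
    (LaxL' N a)ᵀ = -(LaxL' N a) := by
  ext p q
  simp only [Matrix.transpose_apply, Matrix.neg_apply, LaxL', sumE_apply]
  ring

lemma LaxL_pow_symm (N : ℕ) [NeZero N] (a : ZMod (2 * N) → ℝ) (n : ℕ) :
    (LaxL' N a ^ (2 * n))ᵀ = LaxL' N a ^ (2 * n) := by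
  rw [Matrix.transpose_pow, LaxL_transpose, Even.neg_pow ⟨n, two_mul n⟩]

lemma pow_entry_deriv {I : Type*} [Fintype I] [DecidableEq I]
    (F : ℝ → Matrix I I ℝ) (D : Matrix I I ℝ) (t : ℝ)
    (h : ∀ p q, HasDerivAt (fun s => F s p q) (D p q) t) (m : ℕ) :
    ∀ p q, HasDerivAt (fun s => (F s ^ m) p q)
      ((∑ i ∈ Finset.range m, F t ^ i * D * F t ^ (m - 1 - i)) p q) t := by
  induction m with
  | zero =>
      intro p q
      simp only [pow_zero, Finset.range_zero, Finset.sum_empty, Matrix.zero_apply]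
      exact hasDerivAt_const t _
  | succ m ih =>
      intro p q
      have hfun : (fun s => (F s ^ (m + 1)) p q)
          = fun s => ∑ k, (F s ^ m) p k * F s k q := by
        funext s; rw [pow_succ, Matrix.mul_apply]
      rw [hfun]
      have hder := HasDerivAt.fun_sum (fun k (_ : k ∈ Finset.univ) => (ih p k).mul (h k q))
      refine hder.congr_deriv ?_
      have hsum : (∑ i ∈ Finset.range (m + 1), F t ^ i * D * F t ^ (m + 1 - 1 - i))
          = (∑ i ∈ Finset.range m, F t ^ i * D * F t ^ (m - 1 - i)) * F t + F t ^ m * D := by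
        rw [Finset.sum_range_succ, Finset.sum_mul]
        congr 1
        · refine Finset.sum_congr rfl fun i hi => ?_
          have hi' : i < m := Finset.mem_range.mp hi
          have he : m + 1 - 1 - i = (m - 1 - i) + 1 := by omega
          rw [he, pow_succ]
          noncomm_ring
        · have : m + 1 - 1 - m = 0 := by omega
          rw [this, pow_zero, mul_one]
      rw [hsum, Matrix.add_apply, Matrix.mul_apply, Matrix.mul_apply,
        ← Finset.sum_add_distrib]

lemma telescope_sum {I : Type*} [Fintype I] [DecidableEq I]
    (L B D : Matrix I I ℝ) (hD : D = B * L - L * B) (m : ℕ) :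
    (∑ i ∈ Finset.range m, L ^ i * D * L ^ (m - 1 - i)) = B * L ^ m - L ^ m * B := by
  have key : ∀ i ∈ Finset.range m,
      L ^ i * D * L ^ (m - 1 - i)
        = (fun i => L ^ i * B * L ^ (m - i)) i - (fun i => L ^ i * B * L ^ (m - i)) (i + 1) := by
    intro i hi
    have hi' : i < m := Finset.mem_range.mp hi
    simp only
    rw [hD]
    have h1 : L ^ (m - i) = L * L ^ (m - 1 - i) := by
      have he : m - i = (m - 1 - i) + 1 := by omega
      rw [he, pow_succ']
    have h2 : m - (i + 1) = m - 1 - i := by omega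
    rw [h1, h2, pow_succ]
    noncomm_ring
  rw [Finset.sum_congr rfl key, Finset.sum_range_sub' (fun i => L ^ i * B * L ^ (m - i)) m]
  simp [Nat.sub_self]

lemma LaxL_eq (N : ℕ) [NeZero N] (a : ZMod (2 * N) → ℝ) : LaxL N a = LaxL' N a := rfl

lemma hasDerivAt_sqrt_comp (N : ℕ) [NeZero N] (a : ℝ → ZMod (2 * N) → ℝ)
    (hpos : ∀ t j, 0 < a t j)
    (hvolt : ∀ t j, HasDerivAt (fun s => a s j) (a t j * (a t (j + 1) - a t (j - 1))) t)
    (t : ℝ) (r : ZMod (2 * N)) :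
    HasDerivAt (fun s => Real.sqrt (a s r)) (Dco N (a t) r) t := by
  have h := (hvolt t r).sqrt (ne_of_gt (hpos t r))
  convert h using 1
  unfold Dco
  have hne : Real.sqrt (a t r) ≠ 0 := (Real.sqrt_pos.mpr (hpos t r)).ne'
  have hmul : Real.sqrt (a t r) * Real.sqrt (a t r) = a t r :=
    Real.mul_self_sqrt (hpos t r).le
  rw [eq_div_iff (by positivity : (2:ℝ) * Real.sqrt (a t r) ≠ 0)]
  linear_combination (a t (r + 1) - a t (r - 1)) * hmul

lemma hasDerivAt_LaxL_entry (N : ℕ) [NeZero N] (a : ℝ → ZMod (2 * N) → ℝ)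
    (hpos : ∀ t j, 0 < a t j)
    (hvolt : ∀ t j, HasDerivAt (fun s => a s j) (a t j * (a t (j + 1) - a t (j - 1))) t)
    (t : ℝ) (p q : ZMod (2 * N)) :
    HasDerivAt (fun s => LaxL N (a s) p q) (sumE N (Dco N (a t)) 1 p q) t := by
  simp only [LaxL_eq, LaxL', sumE_apply]
  have key := hasDerivAt_sqrt_comp N a hpos hvolt t
  by_cases h1 : p + 1 = q <;> by_cases h2 : q + 1 = p <;>
    simp only [h1, h2, if_pos, if_neg, if_true, if_false]
  · exact (key p).sub (key q)
  · simpa using (key p).sub_const 0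
  · exact (hasDerivAt_const t (0:ℝ)).sub (key q)
  · simpa using hasDerivAt_const t (0:ℝ)

/-- The discrete local conservation law `d/dt Q_j^{[n]} = J_j^{[n]} − J_{j−1}^{[n]}`
along any differentiable positive solution of the periodic Volterra lattice. -/
theorem volterra_local_conservation (N : ℕ) [NeZero N] (hN : 3 ≤ N) (n : ℕ) (hn : 1 ≤ n)
    (a : ℝ → ZMod (2 * N) → ℝ)
    (hpos : ∀ t j, 0 < a t j)
    (hvolt : ∀ t j, HasDerivAt (fun s => a s j) (a t j * (a t (j + 1) - a t (j - 1))) t) :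
    ∀ (t : ℝ) (j : ZMod (2 * N)),
      HasDerivAt (fun s => Qfield N n (a s) j)
        (Jcurrent N n (a t) j - Jcurrent N n (a t) (j - 1)) t := by
  intro t j
  have hD : sumE N (Dco N (a t)) 1
      = sumE N (Bco N (a t)) 2 * LaxL N (a t) - LaxL N (a t) * sumE N (Bco N (a t)) 2 := by
    rw [LaxL_eq]
    exact (myCommutator N hN (a t) (fun r => (hpos t r).le)).symm
  have hp := pow_entry_deriv (fun s => LaxL N (a s)) (sumE N (Dco N (a t)) 1) t
    (fun p q => hasDerivAt_LaxL_entry N a hpos hvolt t p q) (2 * n) j j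
  rw [telescope_sum (LaxL N (a t)) (sumE N (Bco N (a t)) 2) _ hD] at hp
  have hq : HasDerivAt (fun s => Qfield N n (a s) j)
      ((-1 : ℝ) ^ n * ((sumE N (Bco N (a t)) 2 * LaxL N (a t) ^ (2 * n)
        - LaxL N (a t) ^ (2 * n) * sumE N (Bco N (a t)) 2) j j)) t := by
    simpa only [Qfield] using hp.const_mul ((-1 : ℝ) ^ n)
  have hval : (-1 : ℝ) ^ n * ((sumE N (Bco N (a t)) 2 * LaxL N (a t) ^ (2 * n)
        - LaxL N (a t) ^ (2 * n) * sumE N (Bco N (a t)) 2) j j)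
      = Jcurrent N n (a t) j - Jcurrent N n (a t) (j - 1) := by
    have hsym : ∀ u v, (LaxL N (a t) ^ (2 * n)) u v = (LaxL N (a t) ^ (2 * n)) v u := by
      intro u v
      have h := congrFun (congrFun (LaxL_pow_symm N (a t) n) u) v
      simp only [Matrix.transpose_apply] at h
      exact h.symm
    rw [Matrix.sub_apply, sumE_mul_apply, mul_sumE_apply]
    simp only [Jcurrent]
    have i1 : j - 1 + 2 = j + 1 := by ring
    have i2 : j - 1 + 1 = j := by ring
    have i3 : j - 1 - 1 = j - 2 := by ring
    have i4 : j - 2 + 1 = j - 1 := by ring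
    rw [i1, i2, i3]
    rw [Real.sqrt_mul (hpos t j).le, Real.sqrt_mul (hpos t (j - 1)).le,
      Real.sqrt_mul (hpos t (j - 2)).le]
    simp only [Bco]
    rw [i4]
    rw [hsym (j + 2) j, hsym j (j - 2)]
    rw [pow_succ]
    ring
  exact hval ▸ hq
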